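/- Let A = (M₁+φ) − (N₁+φ) be an H-splitting of an H₊-matrix A ∈ ℝ^{n×n} (i.e. ⟨M₁+φ⟩ − |N₁+φ| is a nonsingular M-matrix), with φ diagonal and φ₁, φ₂ positive diagonal, G ≥ 0 a matrix, and D_{φ₁} = φ₁·diag(A). Let U be a positive diagonal matrix such that (⟨M₁+φ⟩ − |N₁+φ|)U is strictly diagonally dominant, and let e = (1,…,1)ᵀ. If φ₂ ≥ D_{φ₁} and (⟨M_{φ₁}+φ_{φ₁}⟩ − |N_{φ₁}+φ_{φ₁}| − φ₂G)Ue > 0, then ρ(L̄) < 1 for L̄ = (⟨M_{φ₁}⟩ + |φ_{φ₁}| + φ₂)⁻¹(|N_{φ₁}+φ_{φ₁}| + |A_{φ₁}−φ₂| + 2φ₂G), so Method 3.1 is convergent. -/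

import Mathlib

open Matrix Finset

noncomputable def specRad {n : ℕ} (A : Matrix (Fin n) (Fin n) ℝ) : ℝ :=
  (spectralRadius ℂ (A.map (algebraMap ℝ ℂ))).toReal

def matAbs {n : ℕ} (A : Matrix (Fin n) (Fin n) ℝ) : Matrix (Fin n) (Fin n) ℝ :=
  fun i j => |A i j|

def vecAbs {n : ℕ} (x : Fin n → ℝ) : Fin n → ℝ := fun i => |x i|

def cmpMat {n : ℕ} (A : Matrix (Fin n) (Fin n) ℝ) : Matrix (Fin n) (Fin n) ℝ :=
  fun i j => if i = j then |A i j| else -|A i j|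

def PosDiag {n : ℕ} (Φ : Matrix (Fin n) (Fin n) ℝ) : Prop :=
  Φ.IsDiag ∧ ∀ i, 0 < Φ i i

def ZMat {n : ℕ} (A : Matrix (Fin n) (Fin n) ℝ) : Prop :=
  ∀ i j, i ≠ j → A i j ≤ 0

def NonsingularMMatrix {n : ℕ} (A : Matrix (Fin n) (Fin n) ℝ) : Prop :=
  ZMat A ∧ IsUnit A.det ∧ ∀ i j, 0 ≤ A⁻¹ i j

def SDD {n : ℕ} (A : Matrix (Fin n) (Fin n) ℝ) : Prop :=
  ∀ i, ∑ j ∈ Finset.univ.erase i, |A i j| < |A i i|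

def ICPsol {n : ℕ} (A : Matrix (Fin n) (Fin n) ℝ) (q : Fin n → ℝ)
    (ψ : (Fin n → ℝ) → (Fin n → ℝ)) (z : Fin n → ℝ) : Prop :=
  (∀ i, 0 ≤ (A *ᵥ z + q) i) ∧ (∀ i, 0 ≤ (z - ψ z) i) ∧ (A *ᵥ z + q) ⬝ᵥ (z - ψ z) = 0

def HplusMatrix {n : ℕ} (A : Matrix (Fin n) (Fin n) ℝ) : Prop :=
  NonsingularMMatrix (cmpMat A) ∧ ∀ i, 0 < A i i

lemma sdd_isUnit {n : ℕ} {K : Type*} [RCLike K] (M : Matrix (Fin n) (Fin n) K)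
    (w : Fin n → ℝ) (hw : ∀ i, 0 < w i)
    (h : ∀ i, ∑ j ∈ Finset.univ.erase i, ‖M i j‖ * w j < ‖M i i‖ * w i) :
    IsUnit M.det := by
  by_contra hdet
  rw [isUnit_iff_ne_zero, not_not] at hdet
  obtain ⟨v, hv0, hMv⟩ := Matrix.exists_mulVec_eq_zero_iff.2 hdet
  obtain ⟨j0, hj0'⟩ := Function.ne_iff.1 hv0
  have hj0 : v j0 ≠ 0 := by simpa using hj0'
  obtain ⟨i, -, hi⟩ := Finset.exists_max_image Finset.univ (fun i => ‖v i‖ / w i) ⟨j0, mem_univ j0⟩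
  set t := ‖v i‖ / w i with ht
  have htpos : 0 < t := lt_of_lt_of_le (div_pos (norm_pos_iff.2 hj0) (hw j0)) (hi j0 (mem_univ j0))
  have hvle : ∀ j, ‖v j‖ ≤ t * w j := fun j =>
    (div_le_iff₀ (hw j)).1 (hi j (mem_univ j))
  have hvi : ‖v i‖ = t * w i := by
    rw [ht, div_mul_cancel₀ _ (hw i).ne']
  have hrow : (M *ᵥ v) i = 0 := congrFun hMv i
  have hsum : ∑ j, M i j * v j = 0 := by
    simpa [Matrix.mulVec, dotProduct] using hrow
  have hMii : M i i * v i = -∑ j ∈ Finset.univ.erase i, M i j * v j := by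
    have h2 := Finset.sum_erase_add Finset.univ (fun j => M i j * v j) (mem_univ i)
    have h3 : M i i * v i + ∑ j ∈ Finset.univ.erase i, M i j * v j = 0 := by
      rw [add_comm]; exact h2.trans hsum
    exact eq_neg_of_add_eq_zero_left h3
  have hle : ‖M i i‖ * ‖v i‖ ≤ ∑ j ∈ Finset.univ.erase i, ‖M i j‖ * ‖v j‖ := by
    calc ‖M i i‖ * ‖v i‖ = ‖M i i * v i‖ := (norm_mul _ _).symm
    _ = ‖∑ j ∈ Finset.univ.erase i, M i j * v j‖ := by rw [hMii, norm_neg]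
    _ ≤ ∑ j ∈ Finset.univ.erase i, ‖M i j * v j‖ := norm_sum_le _ _
    _ = ∑ j ∈ Finset.univ.erase i, ‖M i j‖ * ‖v j‖ := by simp [norm_mul]
  have hlt : ∑ j ∈ Finset.univ.erase i, ‖M i j‖ * ‖v j‖ ≤
      t * ∑ j ∈ Finset.univ.erase i, ‖M i j‖ * w j := by
    rw [Finset.mul_sum]
    refine Finset.sum_le_sum fun j _ => ?_
    have := hvle j
    have h0 : (0:ℝ) ≤ ‖M i j‖ := norm_nonneg _
    nlinarith
  have hfin : t * ∑ j ∈ Finset.univ.erase i, ‖M i j‖ * w j < t * (‖M i i‖ * w i) :=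
    mul_lt_mul_of_pos_left (h i) htpos
  rw [hvi] at hle
  nlinarith

lemma specRad_lt_one {n : ℕ} (P Q : Matrix (Fin n) (Fin n) ℝ) (w : Fin n → ℝ) (θ : ℝ)
    (hw : ∀ i, 0 < w i) (hθ0 : 0 ≤ θ) (hθ1 : θ < 1)
    (hQ0 : ∀ i j, 0 ≤ Q i j)
    (hα : ∀ i, 0 < P i i * w i - ∑ j ∈ Finset.univ.erase i, |P i j| * w j)
    (hkey : ∀ i, ∑ j, Q i j * w j ≤
      θ * (P i i * w i - ∑ j ∈ Finset.univ.erase i, |P i j| * w j)) :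
    specRad (P⁻¹ * Q) < 1 := by
  have habs : ∀ (X : Matrix (Fin n) (Fin n) ℝ) i j, ‖X.map (algebraMap ℝ ℂ) i j‖ = |X i j| := by
    intro X i j; simp [Matrix.map_apply]
  have hPpos : ∀ i, 0 < P i i := by
    intro i
    have h1 := hα i
    have h2 : 0 ≤ ∑ j ∈ Finset.univ.erase i, |P i j| * w j :=
      Finset.sum_nonneg fun j _ => mul_nonneg (abs_nonneg _) (hw j).le
    nlinarith [hw i]
  have hPsdd : ∀ i, ∑ j ∈ Finset.univ.erase i, ‖P.map (algebraMap ℝ ℂ) i j‖ * w j <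
      ‖P.map (algebraMap ℝ ℂ) i i‖ * w i := by
    intro i
    simp only [habs]
    rw [abs_of_pos (hPpos i)]
    have := hα i; linarith
  have hPdet : IsUnit P.det := by
    have := sdd_isUnit (P.map (algebraMap ℝ ℂ)) w hw hPsdd
    rwa [← RingHom.mapMatrix_apply, ← RingHom.map_det, isUnit_map_iff] at this
  have hspec : ∀ z ∈ spectrum ℂ ((P⁻¹ * Q).map (algebraMap ℝ ℂ)), ‖z‖ ≤ θ := by
    intro z hz
    by_contra hzgt
    push_neg at hzgt
    -- z • Pc - Qc is invertible by diagonal dominance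
    set B := z • P.map (algebraMap ℝ ℂ) - Q.map (algebraMap ℝ ℂ) with hB
    have hBdd : ∀ i, ∑ j ∈ Finset.univ.erase i, ‖B i j‖ * w j < ‖B i i‖ * w i := by
      intro i
      have hzn : 0 ≤ ‖z‖ := norm_nonneg z
      have hub : ∀ j, j ≠ i → ‖B i j‖ ≤ ‖z‖ * |P i j| + Q i j := by
        intro j hj
        have : ‖B i j‖ ≤ ‖z‖ * ‖P.map (algebraMap ℝ ℂ) i j‖ + ‖Q.map (algebraMap ℝ ℂ) i j‖ := by
          simp only [hB, Matrix.sub_apply, Matrix.smul_apply, smul_eq_mul]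
          calc ‖z * P.map (algebraMap ℝ ℂ) i j - Q.map (algebraMap ℝ ℂ) i j‖
              ≤ ‖z * P.map (algebraMap ℝ ℂ) i j‖ + ‖Q.map (algebraMap ℝ ℂ) i j‖ := norm_sub_le _ _
            _ = ‖z‖ * ‖P.map (algebraMap ℝ ℂ) i j‖ + ‖Q.map (algebraMap ℝ ℂ) i j‖ := by
                rw [norm_mul]
        rw [habs, habs] at this
        rwa [abs_of_nonneg (hQ0 i j)] at this
      have hlb : ‖z‖ * P i i - Q i i ≤ ‖B i i‖ := by
        have h1 : ‖z * P.map (algebraMap ℝ ℂ) i i‖ - ‖Q.map (algebraMap ℝ ℂ) i i‖ ≤ ‖B i i‖ := by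
          simp only [hB, Matrix.sub_apply, Matrix.smul_apply, smul_eq_mul]
          exact norm_sub_norm_le _ _
        rw [norm_mul, habs, habs, abs_of_pos (hPpos i), abs_of_nonneg (hQ0 i i)] at h1
        exact h1
      have hsum : ∑ j ∈ Finset.univ.erase i, ‖B i j‖ * w j ≤
          ∑ j ∈ Finset.univ.erase i, (‖z‖ * |P i j| + Q i j) * w j := by
        refine Finset.sum_le_sum fun j hj => ?_
        exact mul_le_mul_of_nonneg_right (hub j (Finset.ne_of_mem_erase hj)) (hw j).le
      have hQsplit : ∑ j, Q i j * w j =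
          Q i i * w i + ∑ j ∈ Finset.univ.erase i, Q i j * w j := by
        rw [← Finset.sum_erase_add Finset.univ _ (mem_univ i)]; ring
      have hexp : ∑ j ∈ Finset.univ.erase i, (‖z‖ * |P i j| + Q i j) * w j =
          ‖z‖ * ∑ j ∈ Finset.univ.erase i, |P i j| * w j +
            ∑ j ∈ Finset.univ.erase i, Q i j * w j := by
        rw [Finset.mul_sum, ← Finset.sum_add_distrib]
        exact Finset.sum_congr rfl fun j _ => by ring
      have hzα : θ * (P i i * w i - ∑ j ∈ Finset.univ.erase i, |P i j| * w j) <
          ‖z‖ * (P i i * w i - ∑ j ∈ Finset.univ.erase i, |P i j| * w j) :=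
        mul_lt_mul_of_pos_right hzgt (hα i)
      have hk := hkey i
      rw [hQsplit] at hk
      calc ∑ j ∈ Finset.univ.erase i, ‖B i j‖ * w j
          ≤ ‖z‖ * ∑ j ∈ Finset.univ.erase i, |P i j| * w j +
            ∑ j ∈ Finset.univ.erase i, Q i j * w j := by rw [← hexp]; exact hsum
        _ < (‖z‖ * P i i - Q i i) * w i := by nlinarith
        _ ≤ ‖B i i‖ * w i := mul_le_mul_of_nonneg_right (by linarith [hlb]) (hw i).le
    have hBunit : IsUnit B.det := sdd_isUnit B w hw hBdd
    -- relate B to z • 1 - L̂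
    have hid : P.map (algebraMap ℝ ℂ) * (algebraMap ℂ _ z - (P⁻¹ * Q).map (algebraMap ℝ ℂ)) = B := by
      rw [Algebra.algebraMap_eq_smul_one, mul_sub, mul_smul_comm, mul_one, hB]
      congr 1
      rw [← Matrix.map_mul, ← mul_assoc, Matrix.mul_nonsing_inv P hPdet, one_mul]
    have : IsUnit (algebraMap ℂ (Matrix (Fin n) (Fin n) ℂ) z - (P⁻¹ * Q).map (algebraMap ℝ ℂ)) := by
      rw [Matrix.isUnit_iff_isUnit_det]
      have h2 : IsUnit ((P.map (algebraMap ℝ ℂ)).det *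
          (algebraMap ℂ (Matrix (Fin n) (Fin n) ℂ) z - (P⁻¹ * Q).map (algebraMap ℝ ℂ)).det) := by
        rw [← Matrix.det_mul, hid]; exact hBunit
      exact isUnit_of_mul_isUnit_right h2
    exact (spectrum.mem_iff.1 hz) this
  have hsr : spectralRadius ℂ ((P⁻¹ * Q).map (algebraMap ℝ ℂ)) ≤ ENNReal.ofReal θ := by
    rw [spectralRadius]
    refine iSup₂_le fun z hz => ?_
    rw [ENNReal.ofReal]
    exact_mod_cast (Real.le_toNNReal_iff_coe_le hθ0).2 (by
      rw [coe_nnnorm]; exact hspec z hz)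
  have : specRad (P⁻¹ * Q) ≤ θ := by
    rw [specRad]
    calc (spectralRadius ℂ ((P⁻¹ * Q).map (algebraMap ℝ ℂ))).toReal
        ≤ (ENNReal.ofReal θ).toReal := ENNReal.toReal_mono ENNReal.ofReal_ne_top hsr
      _ = θ := ENNReal.toReal_ofReal hθ0
  linarith

lemma mmatrix_diag_pos {n : ℕ} (B : Matrix (Fin n) (Fin n) ℝ)
    (hB : NonsingularMMatrix B) (i : Fin n) : 0 < B i i := by
  have h1 : B * B⁻¹ = 1 := Matrix.mul_nonsing_inv B hB.2.1
  have h2 : ∑ k, B i k * B⁻¹ k i = 1 := by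
    have := congrFun (congrFun h1 i) i
    simpa [Matrix.mul_apply, Matrix.one_apply] using this
  have h3 : ∑ k ∈ Finset.univ.erase i, B i k * B⁻¹ k i ≤ 0 :=
    Finset.sum_nonpos fun k hk =>
      mul_nonpos_of_nonpos_of_nonneg (hB.1 i k (Finset.ne_of_mem_erase hk).symm) (hB.2.2 k i)
  have h4 : 1 ≤ B i i * B⁻¹ i i := by
    have h5 := Finset.sum_erase_add Finset.univ (fun k => B i k * B⁻¹ k i) (mem_univ i)
    linarith [h5.trans h2]
  nlinarith [hB.2.2 i i]

theorem stmt_11 {n : ℕ} (A M₁ N₁ φ φ₁ φ₂ G U : Matrix (Fin n) (Fin n) ℝ)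
    (hA : HplusMatrix A)
    (hsplit : A = (M₁ + φ) - (N₁ + φ))
    (hHsplit : NonsingularMMatrix (cmpMat (M₁ + φ) - matAbs (N₁ + φ)))
    (hφ : φ.IsDiag) (hφ₁ : PosDiag φ₁) (hφ₂ : PosDiag φ₂)
    (hG : ∀ i j, 0 ≤ G i j)
    (hU : PosDiag U)
    (hUsdd : SDD ((cmpMat (M₁ + φ) - matAbs (N₁ + φ)) * U))
    (hφ₂D : ∀ i j, (φ₁ * Matrix.diagonal A.diag) i j ≤ φ₂ i j)
    (hpos : ∀ i, 0 < (((cmpMat (φ₁ * M₁ + φ₁ * φ) - matAbs (φ₁ * N₁ + φ₁ * φ) - φ₂ * G) * U) *ᵥ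
      (fun _ => (1 : ℝ))) i) :
    specRad ((cmpMat (φ₁ * M₁) + matAbs (φ₁ * φ) + φ₂)⁻¹ *
        (matAbs (φ₁ * N₁ + φ₁ * φ) + matAbs (φ₁ * A - φ₂) + 2 • (φ₂ * G))) < 1 ∧
      ∀ (q : Fin n → ℝ) (ψ : (Fin n → ℝ) → (Fin n → ℝ)),
        (∀ x y : Fin n → ℝ, ∀ i, |ψ x i - ψ y i| ≤ (G *ᵥ vecAbs (x - y)) i) →
        ∀ zstar : Fin n → ℝ, ICPsol A q ψ zstar →
          ∀ z : ℕ → Fin n → ℝ,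
            (∀ k, z (k + 1) = (φ₁ * M₁ + φ₁ * φ + φ₂)⁻¹ *ᵥ
              ((φ₁ * N₁ + φ₁ * φ) *ᵥ z k +
                vecAbs ((φ₁ * A - φ₂) *ᵥ z k + φ₁ *ᵥ q + φ₂ *ᵥ ψ (z k)) -
                φ₁ *ᵥ q + φ₂ *ᵥ ψ (z k))) →
            Filter.Tendsto z Filter.atTop (nhds zstar) := by
  classical
  rcases isEmpty_or_nonempty (Fin n) with hemp | hne
  · constructor
    · have hsub : Subsingleton (Matrix (Fin n) (Fin n) ℂ) :=
        ⟨fun a b => by ext i j; exact isEmptyElim i⟩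
      have hsp : spectrum ℂ (((cmpMat (φ₁ * M₁) + matAbs (φ₁ * φ) + φ₂)⁻¹ *
          (matAbs (φ₁ * N₁ + φ₁ * φ) + matAbs (φ₁ * A - φ₂) + 2 • (φ₂ * G))).map
            (algebraMap ℝ ℂ)) = ∅ :=
        Set.eq_empty_of_forall_notMem fun z hz =>
          (spectrum.mem_iff.1 hz) (@isUnit_of_subsingleton _ _ hsub _)
      rw [specRad, spectralRadius, hsp]
      simp
    · intro q ψ hψ zstar hsol z hz
      have : Subsingleton (Fin n → ℝ) := ⟨fun a b => funext fun i => isEmptyElim i⟩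
      have hzz : z = fun _ => zstar := funext fun k => Subsingleton.elim _ _
      rw [hzz]
      exact tendsto_const_nhds
  · -- notation
    have hφ₁d := hφ₁.1
    have hφ₂d := hφ₂.1
    have hUd := hU.1
    have hwpos : ∀ i, 0 < U i i := hU.2
    have hppos : ∀ i, 0 < φ₁ i i := hφ₁.2
    have hspos : ∀ i, 0 < φ₂ i i := hφ₂.2
    -- diagonal matrix entry lemmas
    have hmulD : ∀ (D Z : Matrix (Fin n) (Fin n) ℝ), D.IsDiag → ∀ i j,
        (D * Z) i j = D i i * Z i j := by
      intro D Z hD i j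
      rw [Matrix.mul_apply]
      refine Finset.sum_eq_single_of_mem i (mem_univ i) fun k _ hk => ?_
      rw [hD (Ne.symm hk), zero_mul]
    have hUrow : ∀ k, ∑ j, U k j = U k k := by
      intro k
      refine Finset.sum_eq_single_of_mem k (mem_univ k) fun j _ hj => hUd (Ne.symm hj)
    have hrow : ∀ (C : Matrix (Fin n) (Fin n) ℝ) i,
        ((C * U) *ᵥ fun _ => (1:ℝ)) i = ∑ k, C i k * U k k := by
      intro C i
      simp only [Matrix.mulVec, dotProduct, Matrix.mul_apply, mul_one]
      rw [Finset.sum_comm]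
      exact Finset.sum_congr rfl fun k _ => by rw [← Finset.mul_sum, hUrow k]
    have hAe : ∀ i j, A i j = (M₁ + φ) i j - (N₁ + φ) i j := by
      intro i j; rw [hsplit]; simp [Matrix.sub_apply]
    -- expansion of hpos
    have habsp : ∀ (Z : Matrix (Fin n) (Fin n) ℝ) i k, |(φ₁ * Z) i k| = φ₁ i i * |Z i k| := by
      intro Z i k
      rw [hmulD φ₁ Z hφ₁d, abs_mul, abs_of_pos (hppos i)]
    have hpos' : ∀ i, 0 < φ₁ i i * |(M₁ + φ) i i| * U i i
        - (∑ j ∈ Finset.univ.erase i, φ₁ i i * |(M₁ + φ) i j| * U j j)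
        - (∑ j, φ₁ i i * |(N₁ + φ) i j| * U j j)
        - ∑ j, φ₂ i i * G i j * U j j := by
      intro i
      have h0 := hpos i
      rw [hrow] at h0
      have hm : φ₁ * M₁ + φ₁ * φ = φ₁ * (M₁ + φ) := (Matrix.mul_add φ₁ M₁ φ).symm
      have hn : φ₁ * N₁ + φ₁ * φ = φ₁ * (N₁ + φ) := (Matrix.mul_add φ₁ N₁ φ).symm
      have e1 : ∀ k, (cmpMat (φ₁ * M₁ + φ₁ * φ) - matAbs (φ₁ * N₁ + φ₁ * φ) - φ₂ * G) i k * U k k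
          = (if i = k then φ₁ i i * |(M₁ + φ) i i| * U k k
              else -(φ₁ i i * |(M₁ + φ) i k| * U k k))
            - φ₁ i i * |(N₁ + φ) i k| * U k k - φ₂ i i * G i k * U k k := by
        intro k
        simp only [Matrix.sub_apply, cmpMat, matAbs, hm, hn, habsp, hmulD φ₂ G hφ₂d]
        by_cases hik : i = k
        · subst hik; simp only [if_true, eq_self_iff_true]; ring
        · simp only [if_neg hik]; ring
      rw [Finset.sum_congr rfl (fun k _ => e1 k)] at h0
      rw [Finset.sum_sub_distrib, Finset.sum_sub_distrib,
        ← Finset.sum_erase_add _ _ (mem_univ i), if_pos rfl] at h0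
      have e2 : ∑ k ∈ Finset.univ.erase i, (if i = k then φ₁ i i * |(M₁ + φ) i i| * U k k
          else -(φ₁ i i * |(M₁ + φ) i k| * U k k))
          = -∑ k ∈ Finset.univ.erase i, φ₁ i i * |(M₁ + φ) i k| * U k k := by
        rw [← Finset.sum_neg_distrib]
        exact Finset.sum_congr rfl fun k hk =>
          if_neg (Ne.symm (Finset.ne_of_mem_erase hk))
      rw [e2] at h0
      linarith
    -- positivity of the diagonal of M₁ + φ
    have hBd : ∀ i, 0 < |(M₁ + φ) i i| - |(N₁ + φ) i i| := by
      intro i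
      have := mmatrix_diag_pos _ hHsplit i
      simpa [Matrix.sub_apply, cmpMat, matAbs] using this
    have hXpos : ∀ i, 0 < (M₁ + φ) i i := by
      intro i
      rcases lt_or_ge 0 ((M₁ + φ) i i) with h | h
      · exact h
      · exfalso
        have h1 := hBd i
        rw [abs_of_nonpos h] at h1
        have h2 : -(N₁ + φ) i i ≤ |(N₁ + φ) i i| := neg_le_abs _
        have h3 : 0 < A i i := hA.2 i
        rw [hAe i i] at h3
        linarith
    -- the contraction data
    set Qm : Matrix (Fin n) (Fin n) ℝ :=
      matAbs (φ₁ * N₁ + φ₁ * φ) + matAbs (φ₁ * A - φ₂) + 2 • (φ₂ * G) with hQmdef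
    set al : Fin n → ℝ := fun i => φ₁ i i * |(M₁ + φ) i i| * U i i + φ₂ i i * U i i
      - ∑ j ∈ Finset.univ.erase i, φ₁ i i * |(M₁ + φ) i j| * U j j with haldef
    set b : Fin n → ℝ := fun i => ∑ j, Qm i j * U j j with hbdef
    have hQme : ∀ i j, Qm i j =
        φ₁ i i * |(N₁ + φ) i j| + |φ₁ i i * A i j - φ₂ i j| + 2 * (φ₂ i i * G i j) := by
      intro i j
      have h2 : (2 • (φ₂ * G) : Matrix (Fin n) (Fin n) ℝ) i j = 2 * (φ₂ i i * G i j) := by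
        rw [Matrix.smul_apply, hmulD φ₂ G hφ₂d]
        norm_num
      simp only [hQmdef, Matrix.add_apply, matAbs, Matrix.sub_apply,
        hmulD φ₁ N₁ hφ₁d, hmulD φ₁ φ hφ₁d, hmulD φ₁ A hφ₁d, h2]
      rw [← mul_add, abs_mul, abs_of_pos (hppos i)]
    have hQm0 : ∀ i j, 0 ≤ Qm i j := by
      intro i j
      rw [hQme]
      have h1 := mul_nonneg (hspos i).le (hG i j)
      have h2 := mul_nonneg (hppos i).le (abs_nonneg ((N₁ + φ) i j))
      have h3 := abs_nonneg (φ₁ i i * A i j - φ₂ i j)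
      linarith
    have hb0 : ∀ i, 0 ≤ b i :=
      fun i => Finset.sum_nonneg fun j _ => mul_nonneg (hQm0 i j) (hwpos j).le
    have hpA : ∀ i, φ₁ i i * A i i ≤ φ₂ i i := by
      intro i
      have h := hφ₂D i i
      rwa [hmulD _ _ hφ₁d, Matrix.diagonal_apply_eq, Matrix.diag_apply] at h
    have hab : ∀ i, b i < al i := by
      intro i
      have h0 := hpos' i
      have hb : b i = (∑ j, φ₁ i i * |(N₁ + φ) i j| * U j j)
          + ((∑ j ∈ Finset.univ.erase i, φ₁ i i * |A i j| * U j j)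
            + (φ₂ i i - φ₁ i i * A i i) * U i i)
          + 2 * ∑ j, φ₂ i i * G i j * U j j := by
        simp only [hbdef]
        have e : ∀ j ∈ Finset.univ, Qm i j * U j j = φ₁ i i * |(N₁ + φ) i j| * U j j
            + |φ₁ i i * A i j - φ₂ i j| * U j j + 2 * (φ₂ i i * G i j * U j j) := by
          intro j _; rw [hQme i j]; ring
        rw [Finset.sum_congr rfl e, Finset.sum_add_distrib, Finset.sum_add_distrib,
          ← Finset.mul_sum]
        congr 1
        congr 1
        rw [← Finset.sum_erase_add _ _ (mem_univ i)]
        congr 1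
        · exact Finset.sum_congr rfl fun j hj => by
            rw [hφ₂d (Ne.symm (Finset.ne_of_mem_erase hj)), sub_zero, abs_mul,
              abs_of_pos (hppos i)]
        · rw [abs_of_nonpos (by linarith [hpA i])]; ring
      have hE4 : ∑ j ∈ Finset.univ.erase i, φ₁ i i * |A i j| * U j j
          ≤ (∑ j ∈ Finset.univ.erase i, φ₁ i i * |(M₁ + φ) i j| * U j j)
            + ∑ j ∈ Finset.univ.erase i, φ₁ i i * |(N₁ + φ) i j| * U j j := by
        rw [← Finset.sum_add_distrib]
        refine Finset.sum_le_sum fun j _ => ?_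
        have h1 : |A i j| ≤ |(M₁ + φ) i j| + |(N₁ + φ) i j| := by
          rw [hAe i j]; exact abs_sub _ _
        have h2 : φ₁ i i * |A i j| ≤ φ₁ i i * (|(M₁ + φ) i j| + |(N₁ + φ) i j|) :=
          mul_le_mul_of_nonneg_left h1 (hppos i).le
        have h3 := mul_le_mul_of_nonneg_right h2 (hwpos j).le
        nlinarith [h3]
      have hE5 : (φ₁ i i * |(M₁ + φ) i i| - φ₁ i i * |(N₁ + φ) i i|) * U i i
          ≤ φ₁ i i * A i i * U i i := by
        have h1 : |(M₁ + φ) i i| - |(N₁ + φ) i i| ≤ A i i := by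
          rw [hAe i i, abs_of_pos (hXpos i)]
          linarith [le_abs_self ((N₁ + φ) i i)]
        have h2 : φ₁ i i * (|(M₁ + φ) i i| - |(N₁ + φ) i i|) ≤ φ₁ i i * A i i :=
          mul_le_mul_of_nonneg_left h1 (hppos i).le
        have h3 := mul_le_mul_of_nonneg_right h2 (hwpos i).le
        nlinarith [h3]
      have hE6 : ∑ j, φ₁ i i * |(N₁ + φ) i j| * U j j
          = (∑ j ∈ Finset.univ.erase i, φ₁ i i * |(N₁ + φ) i j| * U j j)
            + φ₁ i i * |(N₁ + φ) i i| * U i i :=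
        (Finset.sum_erase_add _ _ (mem_univ i)).symm
      have hT0 : 0 ≤ ∑ j, φ₂ i i * G i j * U j j :=
        Finset.sum_nonneg fun j _ =>
          mul_nonneg (mul_nonneg (hspos i).le (hG i j)) (hwpos j).le
      simp only [haldef]
      rw [hb]
      linarith
    have hal0 : ∀ i, 0 < al i := fun i => lt_of_le_of_lt (hb0 i) (hab i)
    haveI := hne
    set θ : ℝ := Finset.univ.sup' Finset.univ_nonempty (fun i => b i / al i) with hθdef
    have hbθ : ∀ i, b i ≤ θ * al i := by
      intro i
      have h1 : b i / al i ≤ θ := Finset.le_sup' (fun i => b i / al i) (mem_univ i)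
      calc b i = b i / al i * al i := (div_mul_cancel₀ (b i) (hal0 i).ne').symm
        _ ≤ θ * al i := mul_le_mul_of_nonneg_right h1 (hal0 i).le
    have hθ0 : 0 ≤ θ := by
      obtain ⟨i⟩ := hne
      exact le_trans (div_nonneg (hb0 i) (hal0 i).le)
        (Finset.le_sup' (fun i => b i / al i) (mem_univ i))
    have hθ1 : θ < 1 := by
      rw [hθdef, Finset.sup'_lt_iff]
      exact fun i _ => (div_lt_one (hal0 i)).2 (hab i)
    -- diagonal dominance of P
    have hXM : ∀ i j, i ≠ j → (M₁ + φ) i j = M₁ i j := by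
      intro i j hij; simp [Matrix.add_apply, hφ hij]
    have hPo : ∀ i j, i ≠ j →
        |(cmpMat (φ₁ * M₁) + matAbs (φ₁ * φ) + φ₂) i j| = φ₁ i i * |(M₁ + φ) i j| := by
      intro i j hij
      rw [hXM i j hij]
      simp only [Matrix.add_apply, cmpMat, matAbs, if_neg hij, habsp,
        hmulD φ₁ φ hφ₁d, hφ hij, hφ₂d hij, mul_zero, abs_zero, add_zero]
      rw [abs_neg, abs_of_nonneg (mul_nonneg (hppos i).le (abs_nonneg _))]
    have hPd : ∀ i, φ₁ i i * |(M₁ + φ) i i| + φ₂ i i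
        ≤ (cmpMat (φ₁ * M₁) + matAbs (φ₁ * φ) + φ₂) i i := by
      intro i
      simp only [Matrix.add_apply, cmpMat, matAbs, eq_self_iff_true, if_true, habsp,
        hmulD φ₁ φ hφ₁d]
      have h1 : |M₁ i i + φ i i| ≤ |M₁ i i| + |φ i i| := abs_add_le _ _
      have h2 : |φ₁ i i * φ i i| = φ₁ i i * |φ i i| := by
        rw [abs_mul, abs_of_pos (hppos i)]
      rw [h2]
      have h3 := mul_le_mul_of_nonneg_left h1 (hppos i).le
      linarith
    have hPdd : ∀ i, al i ≤ (cmpMat (φ₁ * M₁) + matAbs (φ₁ * φ) + φ₂) i i * U i i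
        - ∑ j ∈ Finset.univ.erase i, |(cmpMat (φ₁ * M₁) + matAbs (φ₁ * φ) + φ₂) i j| * U j j := by
      intro i
      have h1 : ∑ j ∈ Finset.univ.erase i,
          |(cmpMat (φ₁ * M₁) + matAbs (φ₁ * φ) + φ₂) i j| * U j j
          = ∑ j ∈ Finset.univ.erase i, φ₁ i i * |(M₁ + φ) i j| * U j j :=
        Finset.sum_congr rfl fun j hj => by
          rw [hPo i j (Finset.ne_of_mem_erase hj).symm]
      rw [h1]
      simp only [haldef]
      nlinarith [hPd i, hwpos i]
    constructor
    · refine specRad_lt_one _ _ (fun i => U i i) θ hwpos hθ0 hθ1 hQm0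
        (fun i => lt_of_lt_of_le (hal0 i) (hPdd i)) (fun i => ?_)
      calc ∑ j, Qm i j * U j j = b i := by simp only [hbdef]
        _ ≤ θ * al i := hbθ i
        _ ≤ θ * _ := mul_le_mul_of_nonneg_left (hPdd i) hθ0
    · intro q ψ hψ zstar hsol z hz
      have hDmv : ∀ (D : Matrix (Fin n) (Fin n) ℝ), D.IsDiag → ∀ (y : Fin n → ℝ) (i : Fin n),
          (D *ᵥ y) i = D i i * y i := by
        intro D hD y i
        simp only [Matrix.mulVec, dotProduct]
        exact Finset.sum_eq_single_of_mem i (mem_univ i) fun k _ hk => by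
          rw [hD (Ne.symm hk), zero_mul]
      have hmv : ∀ (Z : Matrix (Fin n) (Fin n) ℝ) (y : Fin n → ℝ) (i : Fin n),
          ((φ₁ * Z) *ᵥ y) i = φ₁ i i * (Z *ᵥ y) i := by
        intro Z y i
        simp only [Matrix.mulVec, dotProduct, hmulD φ₁ Z hφ₁d, Finset.mul_sum, mul_assoc]
      -- entries of W := φ₁ * M₁ + φ₁ * φ + φ₂
      have hWd : ∀ i, (φ₁ * M₁ + φ₁ * φ + φ₂) i i = φ₁ i i * |(M₁ + φ) i i| + φ₂ i i := by
        intro i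
        have hXd : |M₁ i i + φ i i| = M₁ i i + φ i i := abs_of_pos (hXpos i)
        simp only [Matrix.add_apply, hmulD φ₁ M₁ hφ₁d, hmulD φ₁ φ hφ₁d, hXd]
        ring
      have hWo : ∀ i j, i ≠ j →
          |(φ₁ * M₁ + φ₁ * φ + φ₂) i j| = φ₁ i i * |(M₁ + φ) i j| := by
        intro i j hij
        simp only [Matrix.add_apply, hmulD φ₁ M₁ hφ₁d, hmulD φ₁ φ hφ₁d, hφ₂d hij, add_zero]
        rw [show φ₁ i i * M₁ i j + φ₁ i i * φ i j = φ₁ i i * (M₁ i j + φ i j) by ring,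
          abs_mul, abs_of_pos (hppos i)]
      have hWdpos : ∀ i, 0 ≤ φ₁ i i * |(M₁ + φ) i i| + φ₂ i i := by
        intro i
        have := mul_nonneg (hppos i).le (abs_nonneg ((M₁ + φ) i i))
        linarith [hspos i]
      have hWdet : IsUnit (φ₁ * M₁ + φ₁ * φ + φ₂).det := by
        apply sdd_isUnit _ (fun i => U i i) hwpos
        intro i
        have h1 : ∑ j ∈ Finset.univ.erase i, ‖(φ₁ * M₁ + φ₁ * φ + φ₂) i j‖ * U j j
            = ∑ j ∈ Finset.univ.erase i, φ₁ i i * |(M₁ + φ) i j| * U j j :=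
          Finset.sum_congr rfl fun j hj => by
            rw [Real.norm_eq_abs, hWo i j (Finset.ne_of_mem_erase hj).symm]
        rw [h1, Real.norm_eq_abs, hWd i, abs_of_nonneg (hWdpos i)]
        have h2 := hal0 i
        simp only [haldef] at h2
        linarith
      have hWmv : ∀ v : Fin n → ℝ,
          (φ₁ * M₁ + φ₁ * φ + φ₂) *ᵥ ((φ₁ * M₁ + φ₁ * φ + φ₂)⁻¹ *ᵥ v) = v := by
        intro v
        rw [Matrix.mulVec_mulVec, Matrix.mul_nonsing_inv _ hWdet, Matrix.one_mulVec]
      obtain ⟨hr, hs, hdot⟩ := hsol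
      have hcomp : ∀ i, (A *ᵥ zstar + q) i * (zstar - ψ zstar) i = 0 := by
        intro i
        have hd : ∑ j, (A *ᵥ zstar + q) j * (zstar - ψ zstar) j = 0 := by
          simpa [dotProduct] using hdot
        exact (Finset.sum_eq_zero_iff_of_nonneg
          (fun j _ => mul_nonneg (hr j) (hs j))).1 hd i (mem_univ i)
      have hu : ∀ (y : Fin n → ℝ) (i : Fin n),
          ((φ₁ * A - φ₂) *ᵥ y + φ₁ *ᵥ q + φ₂ *ᵥ ψ y) i
          = φ₁ i i * (A *ᵥ y) i - φ₂ i i * y i + φ₁ i i * q i + φ₂ i i * ψ y i := by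
        intro y i
        simp only [Pi.add_apply, Matrix.sub_mulVec, Pi.sub_apply, hmv A y i,
          hDmv φ₂ hφ₂d, hDmv φ₁ hφ₁d]
      have hustar : ∀ i, |((φ₁ * A - φ₂) *ᵥ zstar + φ₁ *ᵥ q + φ₂ *ᵥ ψ zstar) i|
          = φ₁ i i * (A *ᵥ zstar + q) i + φ₂ i i * (zstar - ψ zstar) i := by
        intro i
        rw [hu]
        have e : φ₁ i i * (A *ᵥ zstar) i - φ₂ i i * zstar i + φ₁ i i * q i + φ₂ i i * ψ zstar i
            = φ₁ i i * (A *ᵥ zstar + q) i - φ₂ i i * (zstar - ψ zstar) i := by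
          simp only [Pi.add_apply, Pi.sub_apply]; ring
        rw [e]
        rcases mul_eq_zero.1 (hcomp i) with h | h
        · rw [h, mul_zero, zero_sub, zero_add, abs_neg]
          exact abs_of_nonneg (mul_nonneg (hspos i).le (hs i))
        · rw [h, mul_zero, sub_zero, add_zero]
          exact abs_of_nonneg (mul_nonneg (hppos i).le (hr i))
      -- zstar is a fixed point
      have hfix : ∀ i, ((φ₁ * M₁ + φ₁ * φ + φ₂) *ᵥ zstar) i
          = ((φ₁ * N₁ + φ₁ * φ) *ᵥ zstar +
              vecAbs ((φ₁ * A - φ₂) *ᵥ zstar + φ₁ *ᵥ q + φ₂ *ᵥ ψ zstar) -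
              φ₁ *ᵥ q + φ₂ *ᵥ ψ zstar) i := by
        intro i
        have hL : ((φ₁ * M₁ + φ₁ * φ + φ₂) *ᵥ zstar) i
            = φ₁ i i * ((M₁ + φ) *ᵥ zstar) i + φ₂ i i * zstar i := by
          simp only [Matrix.add_mulVec, Pi.add_apply, hmv, hDmv φ₂ hφ₂d]
          ring
        have hR1 : ((φ₁ * N₁ + φ₁ * φ) *ᵥ zstar) i = φ₁ i i * ((N₁ + φ) *ᵥ zstar) i := by
          simp only [Matrix.add_mulVec, Pi.add_apply, hmv]
          ring
        have hX : ((M₁ + φ) *ᵥ zstar) i = (A *ᵥ zstar) i + ((N₁ + φ) *ᵥ zstar) i := by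
          have h : (M₁ + φ) = A + (N₁ + φ) := by rw [hsplit]; abel
          rw [h, Matrix.add_mulVec]; rfl
        have hRHS : ((φ₁ * N₁ + φ₁ * φ) *ᵥ zstar +
              vecAbs ((φ₁ * A - φ₂) *ᵥ zstar + φ₁ *ᵥ q + φ₂ *ᵥ ψ zstar) -
              φ₁ *ᵥ q + φ₂ *ᵥ ψ zstar) i
            = ((φ₁ * N₁ + φ₁ * φ) *ᵥ zstar) i
              + |((φ₁ * A - φ₂) *ᵥ zstar + φ₁ *ᵥ q + φ₂ *ᵥ ψ zstar) i|
              - (φ₁ *ᵥ q) i + (φ₂ *ᵥ ψ zstar) i := rfl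
        rw [hRHS, hustar i, hL, hR1, hX]
        simp only [Pi.add_apply, Pi.sub_apply, hDmv φ₂ hφ₂d, hDmv φ₁ hφ₁d]
        ring
      -- entry form of Qm without the diagonal simplification
      have hQme2 : ∀ i j, Qm i j = |(φ₁ * N₁ + φ₁ * φ) i j| + |(φ₁ * A - φ₂) i j|
          + 2 * (φ₂ i i * G i j) := by
        intro i j
        have h2 : (2 • (φ₂ * G) : Matrix (Fin n) (Fin n) ℝ) i j = 2 * (φ₂ i i * G i j) := by
          rw [Matrix.smul_apply, hmulD φ₂ G hφ₂d]
          norm_num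
        simp only [hQmdef, Matrix.add_apply, matAbs, h2]
      have habsmv : ∀ (Z : Matrix (Fin n) (Fin n) ℝ) (v : Fin n → ℝ) (i : Fin n),
          |(Z *ᵥ v) i| ≤ ∑ j, |Z i j| * |v j| := by
        intro Z v i
        simp only [Matrix.mulVec, dotProduct]
        exact (Finset.abs_sum_le_sum_abs _ _).trans
          (le_of_eq (Finset.sum_congr rfl fun j _ => abs_mul _ _))
      -- error bound for the iteration map
      have herr : ∀ (y : Fin n → ℝ) (i : Fin n),
          |((φ₁ * N₁ + φ₁ * φ) *ᵥ y +
              vecAbs ((φ₁ * A - φ₂) *ᵥ y + φ₁ *ᵥ q + φ₂ *ᵥ ψ y) -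
              φ₁ *ᵥ q + φ₂ *ᵥ ψ y) i
            - ((φ₁ * N₁ + φ₁ * φ) *ᵥ zstar +
              vecAbs ((φ₁ * A - φ₂) *ᵥ zstar + φ₁ *ᵥ q + φ₂ *ᵥ ψ zstar) -
              φ₁ *ᵥ q + φ₂ *ᵥ ψ zstar) i|
          ≤ ∑ j, Qm i j * |y j - zstar j| := by
        intro y i
        set Δ : Fin n → ℝ := fun j => y j - zstar j with hΔdef
        have hd1 : ((φ₁ * N₁ + φ₁ * φ) *ᵥ y) i - ((φ₁ * N₁ + φ₁ * φ) *ᵥ zstar) i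
            = ((φ₁ * N₁ + φ₁ * φ) *ᵥ Δ) i := by
          have h2 := congrFun (Matrix.mulVec_sub (φ₁ * N₁ + φ₁ * φ) y zstar) i
          simp only [Pi.sub_apply] at h2
          rw [show Δ = y - zstar from rfl]
          exact h2.symm
        have hd2 : ((φ₁ * A - φ₂) *ᵥ y) i - ((φ₁ * A - φ₂) *ᵥ zstar) i
            = ((φ₁ * A - φ₂) *ᵥ Δ) i := by
          have h2 := congrFun (Matrix.mulVec_sub (φ₁ * A - φ₂) y zstar) i
          simp only [Pi.sub_apply] at h2
          rw [show Δ = y - zstar from rfl]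
          exact h2.symm
        have hB1 : |((φ₁ * N₁ + φ₁ * φ) *ᵥ Δ) i| ≤ ∑ j, |(φ₁ * N₁ + φ₁ * φ) i j| * |Δ j| :=
          habsmv _ _ i
        have hB2 : |((φ₁ * A - φ₂) *ᵥ Δ) i| ≤ ∑ j, |(φ₁ * A - φ₂) i j| * |Δ j| :=
          habsmv _ _ i
        have hB3 : |ψ y i - ψ zstar i| ≤ ∑ j, G i j * |Δ j| := by
          have h := hψ y zstar i
          have he : (G *ᵥ vecAbs (y - zstar)) i = ∑ j, G i j * |Δ j| := by
            simp only [Matrix.mulVec, dotProduct, vecAbs, Pi.sub_apply]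
            rfl
          rwa [he] at h
        have hB3' : |φ₂ i i * (ψ y i - ψ zstar i)| ≤ φ₂ i i * ∑ j, G i j * |Δ j| := by
          rw [abs_mul, abs_of_pos (hspos i)]
          exact mul_le_mul_of_nonneg_left hB3 (hspos i).le
        -- the difference of the absolute-value terms
        have hu2 : |(|((φ₁ * A - φ₂) *ᵥ y + φ₁ *ᵥ q + φ₂ *ᵥ ψ y) i|
            - |((φ₁ * A - φ₂) *ᵥ zstar + φ₁ *ᵥ q + φ₂ *ᵥ ψ zstar) i|)|
            ≤ ∑ j, |(φ₁ * A - φ₂) i j| * |Δ j| + φ₂ i i * ∑ j, G i j * |Δ j| := by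
          refine (abs_abs_sub_abs_le_abs_sub _ _).trans ?_
          have he : ((φ₁ * A - φ₂) *ᵥ y + φ₁ *ᵥ q + φ₂ *ᵥ ψ y) i
              - ((φ₁ * A - φ₂) *ᵥ zstar + φ₁ *ᵥ q + φ₂ *ᵥ ψ zstar) i
              = ((φ₁ * A - φ₂) *ᵥ Δ) i + φ₂ i i * (ψ y i - ψ zstar i) := by
            simp only [Pi.add_apply, hDmv φ₂ hφ₂d, hDmv φ₁ hφ₁d, ← hd2]
            ring
          rw [he]
          exact (abs_add_le _ _).trans (add_le_add hB2 hB3')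
        have hsplit2 : (∑ j, |(φ₁ * N₁ + φ₁ * φ) i j| * |Δ j|)
              + ((∑ j, |(φ₁ * A - φ₂) i j| * |Δ j|) + φ₂ i i * ∑ j, G i j * |Δ j|)
              + φ₂ i i * ∑ j, G i j * |Δ j| = ∑ j, Qm i j * |Δ j| := by
          simp only [Finset.mul_sum, ← Finset.sum_add_distrib]
          exact Finset.sum_congr rfl fun j _ => by rw [hQme2 i j]; ring
        have hgoal : ((φ₁ * N₁ + φ₁ * φ) *ᵥ y +
              vecAbs ((φ₁ * A - φ₂) *ᵥ y + φ₁ *ᵥ q + φ₂ *ᵥ ψ y) -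
              φ₁ *ᵥ q + φ₂ *ᵥ ψ y) i
            - ((φ₁ * N₁ + φ₁ * φ) *ᵥ zstar +
              vecAbs ((φ₁ * A - φ₂) *ᵥ zstar + φ₁ *ᵥ q + φ₂ *ᵥ ψ zstar) -
              φ₁ *ᵥ q + φ₂ *ᵥ ψ zstar) i
            = ((φ₁ * N₁ + φ₁ * φ) *ᵥ Δ) i
              + (|((φ₁ * A - φ₂) *ᵥ y + φ₁ *ᵥ q + φ₂ *ᵥ ψ y) i|
                - |((φ₁ * A - φ₂) *ᵥ zstar + φ₁ *ᵥ q + φ₂ *ᵥ ψ zstar) i|)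
              + φ₂ i i * (ψ y i - ψ zstar i) := by
          simp only [Pi.add_apply, Pi.sub_apply, vecAbs, hDmv φ₂ hφ₂d, ← hd1]
          ring
        rw [hgoal]
        calc |((φ₁ * N₁ + φ₁ * φ) *ᵥ Δ) i
              + (|((φ₁ * A - φ₂) *ᵥ y + φ₁ *ᵥ q + φ₂ *ᵥ ψ y) i|
                - |((φ₁ * A - φ₂) *ᵥ zstar + φ₁ *ᵥ q + φ₂ *ᵥ ψ zstar) i|)
              + φ₂ i i * (ψ y i - ψ zstar i)|
            ≤ |((φ₁ * N₁ + φ₁ * φ) *ᵥ Δ) i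
              + (|((φ₁ * A - φ₂) *ᵥ y + φ₁ *ᵥ q + φ₂ *ᵥ ψ y) i|
                - |((φ₁ * A - φ₂) *ᵥ zstar + φ₁ *ᵥ q + φ₂ *ᵥ ψ zstar) i|)|
              + |φ₂ i i * (ψ y i - ψ zstar i)| := abs_add_le _ _
          _ ≤ |((φ₁ * N₁ + φ₁ * φ) *ᵥ Δ) i|
              + |(|((φ₁ * A - φ₂) *ᵥ y + φ₁ *ᵥ q + φ₂ *ᵥ ψ y) i|
                - |((φ₁ * A - φ₂) *ᵥ zstar + φ₁ *ᵥ q + φ₂ *ᵥ ψ zstar) i|)|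
              + |φ₂ i i * (ψ y i - ψ zstar i)| := by
                have := abs_add_le (((φ₁ * N₁ + φ₁ * φ) *ᵥ Δ) i)
                  (|((φ₁ * A - φ₂) *ᵥ y + φ₁ *ᵥ q + φ₂ *ᵥ ψ y) i|
                    - |((φ₁ * A - φ₂) *ᵥ zstar + φ₁ *ᵥ q + φ₂ *ᵥ ψ zstar) i|)
                linarith
          _ ≤ (∑ j, |(φ₁ * N₁ + φ₁ * φ) i j| * |Δ j|)
              + ((∑ j, |(φ₁ * A - φ₂) i j| * |Δ j|) + φ₂ i i * ∑ j, G i j * |Δ j|)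
              + φ₂ i i * ∑ j, G i j * |Δ j| := add_le_add (add_le_add hB1 hu2) hB3'
          _ = ∑ j, Qm i j * |Δ j| := hsplit2
      -- the contraction estimate
      set E : ℕ → ℝ := fun k => Finset.univ.sup' Finset.univ_nonempty
        (fun i => |z k i - zstar i| / U i i) with hEdef
      have hE0 : ∀ k, 0 ≤ E k := by
        intro k
        obtain ⟨i⟩ := hne
        exact le_trans (div_nonneg (abs_nonneg _) (hwpos i).le)
          (Finset.le_sup' (fun i => |z k i - zstar i| / U i i) (mem_univ i))
      have hEb : ∀ k j, |z k j - zstar j| ≤ E k * U j j := by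
        intro k j
        have h1 : |z k j - zstar j| / U j j ≤ E k :=
          Finset.le_sup' (fun i => |z k i - zstar i| / U i i) (mem_univ j)
        calc |z k j - zstar j| = |z k j - zstar j| / U j j * U j j :=
            (div_mul_cancel₀ _ (hwpos j).ne').symm
          _ ≤ E k * U j j := mul_le_mul_of_nonneg_right h1 (hwpos j).le
      have hWe : ∀ k, (φ₁ * M₁ + φ₁ * φ + φ₂) *ᵥ (fun l => z (k+1) l - zstar l)
          = fun i => ((φ₁ * N₁ + φ₁ * φ) *ᵥ z k +
              vecAbs ((φ₁ * A - φ₂) *ᵥ z k + φ₁ *ᵥ q + φ₂ *ᵥ ψ (z k)) -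
              φ₁ *ᵥ q + φ₂ *ᵥ ψ (z k)) i
            - ((φ₁ * N₁ + φ₁ * φ) *ᵥ zstar +
              vecAbs ((φ₁ * A - φ₂) *ᵥ zstar + φ₁ *ᵥ q + φ₂ *ᵥ ψ zstar) -
              φ₁ *ᵥ q + φ₂ *ᵥ ψ zstar) i := by
        intro k
        funext i
        have h1 : (fun l => z (k+1) l - zstar l) = z (k+1) - zstar := rfl
        rw [h1, Matrix.mulVec_sub]
        have h2 : (φ₁ * M₁ + φ₁ * φ + φ₂) *ᵥ z (k+1)
            = ((φ₁ * N₁ + φ₁ * φ) *ᵥ z k +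
              vecAbs ((φ₁ * A - φ₂) *ᵥ z k + φ₁ *ᵥ q + φ₂ *ᵥ ψ (z k)) -
              φ₁ *ᵥ q + φ₂ *ᵥ ψ (z k)) := by
          rw [hz k, hWmv]
        rw [h2]
        simp only [Pi.sub_apply]
        rw [hfix i]
      have hcon : ∀ k, E (k+1) ≤ θ * E k := by
        intro k
        obtain ⟨i, -, hi⟩ := Finset.exists_max_image Finset.univ
          (fun i => |z (k+1) i - zstar i| / U i i) Finset.univ_nonempty
        have hEi : E (k+1) = |z (k+1) i - zstar i| / U i i := by
          refine le_antisymm (Finset.sup'_le _ _ fun j _ => hi j (mem_univ j))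
            (Finset.le_sup' (fun i => |z (k+1) i - zstar i| / U i i) (mem_univ i))
        have hei : |z (k+1) i - zstar i| = E (k+1) * U i i := by
          rw [hEi, div_mul_cancel₀ _ (hwpos i).ne']
        -- the i-th row of the error identity
        have hrow2 := congrFun (hWe k) i
        have hsum2 : ∑ j, (φ₁ * M₁ + φ₁ * φ + φ₂) i j * (z (k+1) j - zstar j)
            = ((φ₁ * N₁ + φ₁ * φ) *ᵥ z k +
              vecAbs ((φ₁ * A - φ₂) *ᵥ z k + φ₁ *ᵥ q + φ₂ *ᵥ ψ (z k)) -
              φ₁ *ᵥ q + φ₂ *ᵥ ψ (z k)) i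
            - ((φ₁ * N₁ + φ₁ * φ) *ᵥ zstar +
              vecAbs ((φ₁ * A - φ₂) *ᵥ zstar + φ₁ *ᵥ q + φ₂ *ᵥ ψ zstar) -
              φ₁ *ᵥ q + φ₂ *ᵥ ψ zstar) i := by
          rw [← hrow2]
          simp only [Matrix.mulVec, dotProduct]
        have hMrow : (φ₁ * M₁ + φ₁ * φ + φ₂) i i * (z (k+1) i - zstar i)
            = (∑ j, (φ₁ * M₁ + φ₁ * φ + φ₂) i j * (z (k+1) j - zstar j))
              - ∑ j ∈ Finset.univ.erase i, (φ₁ * M₁ + φ₁ * φ + φ₂) i j * (z (k+1) j - zstar j) := by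
          rw [← Finset.sum_erase_add Finset.univ
            (fun j => (φ₁ * M₁ + φ₁ * φ + φ₂) i j * (z (k+1) j - zstar j)) (mem_univ i)]
          ring
        have hb1 : |(∑ j, (φ₁ * M₁ + φ₁ * φ + φ₂) i j * (z (k+1) j - zstar j))| ≤ E k * b i := by
          rw [hsum2]
          refine (herr (z k) i).trans ?_
          have h3 : ∀ j ∈ Finset.univ, Qm i j * |z k j - zstar j| ≤ Qm i j * (E k * U j j) :=
            fun j _ => mul_le_mul_of_nonneg_left (hEb k j) (hQm0 i j)
          refine (Finset.sum_le_sum h3).trans ?_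
          simp only [hbdef, Finset.mul_sum]
          exact le_of_eq (Finset.sum_congr rfl fun j _ => by ring)
        have hb2 : |∑ j ∈ Finset.univ.erase i,
              (φ₁ * M₁ + φ₁ * φ + φ₂) i j * (z (k+1) j - zstar j)|
            ≤ E (k+1) * ∑ j ∈ Finset.univ.erase i, φ₁ i i * |(M₁ + φ) i j| * U j j := by
          refine (Finset.abs_sum_le_sum_abs _ _).trans ?_
          rw [Finset.mul_sum]
          refine Finset.sum_le_sum fun j hj => ?_
          rw [abs_mul, hWo i j (Finset.ne_of_mem_erase hj).symm]
          have h4 : |z (k+1) j - zstar j| ≤ E (k+1) * U j j := by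
            have h5 : |z (k+1) j - zstar j| / U j j ≤ |z (k+1) i - zstar i| / U i i :=
              hi j (mem_univ j)
            rw [← hEi] at h5
            calc |z (k+1) j - zstar j| = |z (k+1) j - zstar j| / U j j * U j j :=
                (div_mul_cancel₀ _ (hwpos j).ne').symm
              _ ≤ E (k+1) * U j j := mul_le_mul_of_nonneg_right h5 (hwpos j).le
          calc φ₁ i i * |(M₁ + φ) i j| * |z (k+1) j - zstar j|
              ≤ φ₁ i i * |(M₁ + φ) i j| * (E (k+1) * U j j) :=
                mul_le_mul_of_nonneg_left h4
                  (mul_nonneg (hppos i).le (abs_nonneg _))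
            _ = E (k+1) * (φ₁ i i * |(M₁ + φ) i j| * U j j) := by ring
        have hdiag : |(φ₁ * M₁ + φ₁ * φ + φ₂) i i * (z (k+1) i - zstar i)|
            = (φ₁ i i * |(M₁ + φ) i i| + φ₂ i i) * (E (k+1) * U i i) := by
          rw [abs_mul, hWd i, abs_of_nonneg (hWdpos i), hei]
        have hfin : E (k+1) * al i ≤ (θ * E k) * al i := by
          have h6 : |(φ₁ * M₁ + φ₁ * φ + φ₂) i i * (z (k+1) i - zstar i)|
              ≤ E k * b i + E (k+1) * ∑ j ∈ Finset.univ.erase i,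
                  φ₁ i i * |(M₁ + φ) i j| * U j j := by
            rw [hMrow]
            refine (abs_sub _ _).trans (add_le_add hb1 hb2)
          rw [hdiag] at h6
          have h7 : b i ≤ θ * al i := hbθ i
          have h8 : E k * b i ≤ E k * (θ * al i) :=
            mul_le_mul_of_nonneg_left h7 (hE0 k)
          simp only [haldef] at h8 ⊢
          nlinarith [h6, h8]
        exact le_of_mul_le_mul_right hfin (hal0 i)
      have hEpow : ∀ k, E k ≤ E 0 * θ ^ k := by
        intro k
        induction k with
        | zero => simp
        | succ k ih =>
          calc E (k+1) ≤ θ * E k := hcon k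
            _ ≤ θ * (E 0 * θ ^ k) := mul_le_mul_of_nonneg_left ih hθ0
            _ = E 0 * θ ^ (k+1) := by ring
      rw [tendsto_pi_nhds]
      intro x
      have h1 : Filter.Tendsto (fun k => z k x - zstar x) Filter.atTop (nhds 0) := by
        apply squeeze_zero_norm (a := fun k => E 0 * θ ^ k * U x x)
        · intro k
          calc ‖z k x - zstar x‖ = |z k x - zstar x| := rfl
            _ ≤ E k * U x x := hEb k x
            _ ≤ E 0 * θ ^ k * U x x :=
              mul_le_mul_of_nonneg_right (hEpow k) (hwpos x).le
        · have h2 := (tendsto_pow_atTop_nhds_zero_of_lt_one hθ0 hθ1).const_mul (E 0)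
          have h3 := h2.mul_const (U x x)
          simpa using h3
      have h4 := h1.add_const (zstar x)
      simpa using h4
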